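/- Let k be a natural number and let g₀, …, g_k be real polynomials with g_k not identically zero and g_k(d) ≥ 0 for every real d ≥ 0; define p(d,n) = Σ_{i=0}^{k} g_i(d)·n^i. Then for every M there exist integers d ≥ M and n ≥ M with n even such that p(d-1, n-1) + 2·p(d, n/2) + 2 > p(d, n). -/

import Mathlib

open Polynomial Filter

private lemma ev_pos (q : ℝ[X]) (h : 0 < q.leadingCoeff) :
    ∀ᶠ x in atTop, 0 < q.eval x := by
  rcases le_or_gt q.degree 0 with hd | hd
  · have hq : q = C (q.coeff 0) := eq_C_of_degree_le_zero hd
    have hn : q.natDegree = 0 := natDegree_eq_zero_iff_degree_le_zero.mpr hd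
    have : 0 < q.coeff 0 := by rwa [Polynomial.leadingCoeff, hn] at h
    filter_upwards with x
    rw [hq]; simpa using this
  · exact (q.tendsto_atTop_of_leadingCoeff_nonneg hd h.le).eventually_gt_atTop 0

private lemma lc_pos (G : ℝ[X]) (h0 : G ≠ 0) (hnn : ∀ d : ℝ, 0 ≤ d → 0 ≤ G.eval d) :
    0 < G.leadingCoeff := by
  rcases lt_trichotomy G.leadingCoeff 0 with h | h | h
  · exfalso
    rcases le_or_gt G.degree 0 with hd | hd
    · have hq : G = C (G.coeff 0) := eq_C_of_degree_le_zero hd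
      have hn : G.natDegree = 0 := natDegree_eq_zero_iff_degree_le_zero.mpr hd
      have h1 : G.leadingCoeff = G.coeff 0 := by rw [Polynomial.leadingCoeff, hn]
      have := hnn 0 le_rfl
      rw [hq] at this; simp at this
      rw [h1] at h; linarith
    · have := (G.tendsto_atBot_of_leadingCoeff_nonpos hd h.le).eventually (eventually_lt_atBot 0)
      rcases (this.and (eventually_ge_atTop (0:ℝ))).exists with ⟨x, hx1, hx2⟩
      exact absurd (hnn x hx2) (not_le.2 hx1)
  · exact absurd (leadingCoeff_eq_zero.1 h) h0
  · exact h

/-- Remark 4.4 / Appendix C: no polynomial `p(d,n) = Σ_{i=0}^{k} g_i(d) n^i`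
with leading coefficient polynomial `g_k` nonzero and nonnegative on `d ≥ 0`
can satisfy the inductive-step inequality
`p(d-1,n-1) + 2 p(d,n/2) + 2 ≤ p(d,n)` for all sufficiently large `d` and
even `n`. -/
theorem no_polynomial_bound (k : ℕ) (g : Fin (k + 1) → Polynomial ℝ)
    (hgk : g (Fin.last k) ≠ 0)
    (hgknonneg : ∀ d : ℝ, 0 ≤ d → 0 ≤ (g (Fin.last k)).eval d) :
    ∀ M : ℕ, ∃ d n : ℕ, M ≤ d ∧ M ≤ n ∧ Even n ∧
      (∑ i : Fin (k + 1), (g i).eval ((d : ℝ) - 1) * ((n : ℝ) - 1) ^ (i : ℕ))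
        + 2 * (∑ i : Fin (k + 1), (g i).eval (d : ℝ) * ((n : ℝ) / 2) ^ (i : ℕ))
        + 2
      > ∑ i : Fin (k + 1), (g i).eval (d : ℝ) * (n : ℝ) ^ (i : ℕ) := by
  intro M
  rcases Nat.eq_zero_or_pos k with hk | hk
  · -- k = 0 : p is constant in n
    subst hk
    refine ⟨max M 1, 2 * M, le_max_left _ _, by omega, ⟨M, by ring⟩, ?_⟩
    have hd1 : (1:ℝ) ≤ (max M 1 : ℕ) := by exact_mod_cast Nat.one_le_iff_ne_zero.2 (by omega)
    have hA : 0 ≤ (g (Fin.last 0)).eval (((max M 1 : ℕ) : ℝ) - 1) :=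
      hgknonneg _ (by linarith)
    have hB : 0 ≤ (g (Fin.last 0)).eval ((max M 1 : ℕ) : ℝ) :=
      hgknonneg _ (by linarith)
    have h0 : Fin.last 0 = (0 : Fin 1) := rfl
    rw [h0] at hA hB
    simp only [Fin.sum_univ_succ, Finset.univ_eq_empty, Finset.sum_empty, add_zero, Fin.val_zero, pow_zero, mul_one]
    linarith
  · -- k ≥ 1
    set G := g (Fin.last k) with hG
    have ha : 0 < G.leadingCoeff := lc_pos G hgk hgknonneg
    set c : ℝ := 2 * (1/2 : ℝ) ^ k - 1 with hc
    have hc1 : 0 < 1 + c := by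
      have : (0:ℝ) < (1/2 : ℝ) ^ k := by positivity
      rw [hc]; linarith
    set q : ℝ[X] := G.comp (X - C 1) + C c * G with hq
    -- leading coefficient of q
    set m := G.natDegree with hm
    have hdX : (X - C (1:ℝ)).natDegree = 1 := natDegree_X_sub_C 1
    have hcomp_deg : (G.comp (X - C 1)).natDegree = m := by
      rw [natDegree_comp, hdX, mul_one]
    have hcomp_lc : (G.comp (X - C 1)).leadingCoeff = G.leadingCoeff := by
      rw [leadingCoeff_comp (by rw [hdX]; exact one_ne_zero),
        (monic_X_sub_C (1:ℝ)).leadingCoeff, one_pow, mul_one]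
    have hqcoeff : q.coeff m = (1 + c) * G.leadingCoeff := by
      rw [hq, coeff_add, coeff_C_mul]
      have h1 : (G.comp (X - C 1)).coeff m = G.leadingCoeff := by
        rw [← hcomp_deg] at *
        rw [show (G.comp (X - C 1)).coeff (G.comp (X - C 1)).natDegree
              = (G.comp (X - C 1)).leadingCoeff from rfl, hcomp_lc]
      rw [h1]
      have : G.coeff m = G.leadingCoeff := rfl
      rw [this]; ring
    have hqdeg : q.natDegree ≤ m := by
      rw [hq]
      refine le_trans (natDegree_add_le _ _) ?_
      simp only [max_le_iff]
      exact ⟨le_of_eq hcomp_deg, le_trans (natDegree_mul_le) (by simp [hm])⟩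
    have hqlc : 0 < q.leadingCoeff := by
      have hne : q.coeff m ≠ 0 := by rw [hqcoeff]; positivity
      have : q.natDegree = m := le_antisymm hqdeg (le_natDegree_of_ne_zero hne)
      rw [Polynomial.leadingCoeff, this, hqcoeff]; positivity
    obtain ⟨d₀, hd₀⟩ := eventually_atTop.1 (ev_pos q hqlc)
    set d : ℕ := max M ⌈d₀⌉₊ with hd
    have hdM : M ≤ d := le_max_left _ _
    have hdd₀ : d₀ ≤ (d : ℝ) := le_trans (Nat.le_ceil d₀) (by exact_mod_cast le_max_right M _)
    have hqd : 0 < q.eval (d : ℝ) := hd₀ _ hdd₀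
    have hL : 0 < G.eval ((d : ℝ) - 1) + c * G.eval (d : ℝ) := by
      rw [hq] at hqd; simpa [eval_comp] using hqd
    -- now the polynomial in n
    set A : Fin (k+1) → ℝ := fun i => (g i).eval ((d : ℝ) - 1) with hA
    set B : Fin (k+1) → ℝ := fun i => (g i).eval (d : ℝ) with hB
    set P : ℝ[X] := (∑ i : Fin (k+1), C (A i) * (X - C 1) ^ (i : ℕ))
        + (∑ i : Fin (k+1), C (2 * B i * (1/2) ^ (i : ℕ)) * X ^ (i : ℕ))
        + C 2 - ∑ i : Fin (k+1), C (B i) * X ^ (i : ℕ) with hP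
    have hlast : ∀ i : Fin (k+1), i ≠ Fin.last k → (i : ℕ) < k := by
      intro i hi
      refine lt_of_le_of_ne (Nat.lt_succ_iff.mp i.isLt) fun h' => hi ?_
      exact Fin.ext (by simpa using h')
    have hXC : ∀ i : Fin (k+1), ((X - C (1:ℝ)) ^ (i:ℕ)).coeff k
        = if i = Fin.last k then 1 else 0 := by
      intro i
      by_cases h : i = Fin.last k
      · subst h
        have hnd : ((X - C (1:ℝ)) ^ k).natDegree = k := by
          rw [natDegree_pow, natDegree_X_sub_C, mul_one]
        have := ((monic_X_sub_C (1:ℝ)).pow k).coeff_natDegree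
        rw [hnd] at this
        simpa using this
      · have hlt : (i:ℕ) < k := hlast i h
        have : ((X - C (1:ℝ)) ^ (i:ℕ)).natDegree < k := by
          rw [natDegree_pow, natDegree_X_sub_C, mul_one]; exact hlt
        rw [if_neg h]; exact coeff_eq_zero_of_natDegree_lt this
    have hXP : ∀ i : Fin (k+1), ((X : ℝ[X]) ^ (i:ℕ)).coeff k
        = if i = Fin.last k then 1 else 0 := by
      intro i
      by_cases h : i = Fin.last k
      · subst h; simp [coeff_X_pow]
      · have hlt : (i:ℕ) < k := hlast i h
        simp [coeff_X_pow, h, Nat.ne_of_gt hlt]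
    have hPcoeff : P.coeff k = A (Fin.last k) + c * B (Fin.last k) := by
      rw [hP, coeff_sub, coeff_add, coeff_add, finset_sum_coeff, finset_sum_coeff,
        finset_sum_coeff]
      have s1 : (∑ i : Fin (k+1), (C (A i) * (X - C 1) ^ (i:ℕ)).coeff k)
          = A (Fin.last k) := by
        simp only [coeff_C_mul, hXC, mul_ite, mul_one, mul_zero]
        simp
      have s2 : (∑ i : Fin (k+1), (C (2 * B i * (1/2) ^ (i:ℕ)) * X ^ (i:ℕ)).coeff k)
          = 2 * B (Fin.last k) * (1/2) ^ k := by
        simp only [coeff_C_mul, hXP, mul_ite, mul_one, mul_zero]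
        simp
      have s3 : (∑ i : Fin (k+1), (C (B i) * X ^ (i:ℕ)).coeff k) = B (Fin.last k) := by
        simp only [coeff_C_mul, hXP, mul_ite, mul_one, mul_zero]
        simp
      have s4 : (C (2:ℝ)).coeff k = 0 := by
        rw [coeff_C, if_neg (Nat.pos_iff_ne_zero.mp hk)]
      rw [s1, s2, s3, s4, hc]; ring
    have hPdeg : P.natDegree ≤ k := by
      rw [hP]
      refine le_trans (natDegree_sub_le _ _) (max_le (le_trans (natDegree_add_le _ _)
        (max_le (le_trans (natDegree_add_le _ _) (max_le ?_ ?_)) ?_)) ?_)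
      · refine natDegree_sum_le_of_forall_le _ _ fun i _ => ?_
        refine le_trans natDegree_mul_le ?_
        rw [natDegree_C, zero_add, natDegree_pow, natDegree_X_sub_C, mul_one]
        exact Nat.lt_succ_iff.mp i.isLt
      · refine natDegree_sum_le_of_forall_le _ _ fun i _ => ?_
        refine le_trans natDegree_mul_le ?_
        rw [natDegree_C, zero_add, natDegree_X_pow]
        exact Nat.lt_succ_iff.mp i.isLt
      · simp
      · refine natDegree_sum_le_of_forall_le _ _ fun i _ => ?_
        refine le_trans natDegree_mul_le ?_
        rw [natDegree_C, zero_add, natDegree_X_pow]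
        exact Nat.lt_succ_iff.mp i.isLt
    have hPlc : 0 < P.leadingCoeff := by
      have hLL : 0 < A (Fin.last k) + c * B (Fin.last k) := by
        simpa [hA, hB, hG] using hL
      have hne : P.coeff k ≠ 0 := by rw [hPcoeff]; exact ne_of_gt hLL
      have hdeq : P.natDegree = k := le_antisymm hPdeg (le_natDegree_of_ne_zero hne)
      rw [Polynomial.leadingCoeff, hdeq, hPcoeff]; exact hLL
    obtain ⟨x₀, hx₀⟩ := eventually_atTop.1 (ev_pos P hPlc)
    set n : ℕ := 2 * max M ⌈x₀⌉₊ with hn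
    have hnM : M ≤ n := by have := le_max_left M ⌈x₀⌉₊; omega
    have hnx₀ : x₀ ≤ (n : ℝ) := by
      refine le_trans (Nat.le_ceil x₀) ?_
      have : (⌈x₀⌉₊ : ℕ) ≤ n := by have := le_max_right M ⌈x₀⌉₊; omega
      exact_mod_cast this
    have hPn : 0 < P.eval (n : ℝ) := hx₀ _ hnx₀
    refine ⟨d, n, hdM, hnM, ⟨max M ⌈x₀⌉₊, by rw [hn]; ring⟩, ?_⟩
    have hev : P.eval (n : ℝ) =
        (∑ i : Fin (k + 1), A i * ((n : ℝ) - 1) ^ (i : ℕ))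
        + (∑ i : Fin (k + 1), 2 * B i * (1/2) ^ (i : ℕ) * (n : ℝ) ^ (i : ℕ))
        + 2 - ∑ i : Fin (k + 1), B i * (n : ℝ) ^ (i : ℕ) := by
      rw [hP]; simp [eval_finset_sum]
    have hmid : (∑ i : Fin (k + 1), 2 * B i * (1/2) ^ (i : ℕ) * (n : ℝ) ^ (i : ℕ))
        = 2 * ∑ i : Fin (k + 1), B i * ((n : ℝ) / 2) ^ (i : ℕ) := by
      rw [Finset.mul_sum]
      refine Finset.sum_congr rfl fun i _ => ?_
      rw [div_pow, div_pow, one_pow]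
      field_simp
    rw [hev, hmid] at hPn
    simp only [hA, hB] at hPn
    linarith
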